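/- With g(α,s) as above and ĝ(α,s) = ∂_s g(α,s)/∂_s g(α,1), we have ∂_s g(α,1) = f'(f^{-1}(1-α))²/((1-α) f'(1)) and ∂_s ĝ(α,1) evaluated at α gives ∂_s ĝ(α,1) = f''(f^{-1}(1-α))/f'(1). In particular, ∂_s ĝ(α_c, 1) = 1 where α_c is the smallest positive solution of f''(f^{-1}(1-α))/f'(1) = 1. -/

import Mathlib

lemma deriv_aff (f : ℝ → ℝ) (hf : Differentiable ℝ f) (c a b d s : ℝ) :
    deriv (fun s : ℝ => c * f (a - (1 - s) * b / d)) s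
      = c * (b / d) * deriv f (a - (1 - s) * b / d) := by
  have hu : HasDerivAt (fun s : ℝ => a - (1 - s) * b / d) (b / d) s := by
    have h1 : HasDerivAt (fun s : ℝ => a - (1 - s) * (b / d)) (-(-1 * (b / d))) s :=
      (((hasDerivAt_id s).const_sub 1).mul_const (b / d)).const_sub a
    have h2 : (fun s : ℝ => a - (1 - s) * b / d) = fun s : ℝ => a - (1 - s) * (b / d) := by
      funext t; ring
    rw [h2]; convert h1 using 1; ring
  have hcomp : HasDerivAt (fun s : ℝ => c * f (a - (1 - s) * b / d))
      (c * (deriv f (a - (1 - s) * b / d) * (b / d))) s :=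
    (((hf _).hasDerivAt.comp s hu)).const_mul c
  rw [hcomp.deriv]; ring

lemma conv_f (π : ℕ → ℝ) (hπ : ∀ i, 0 ≤ π i) (hS : Summable π) (f : ℝ → ℝ)
    (hf : ∀ s ∈ Set.Icc (0:ℝ) 1, f s = ∑' i : ℕ, π i * s ^ i) :
    ConvexOn ℝ (Set.Icc (0:ℝ) 1) f := by
  have Sx : ∀ t ∈ Set.Icc (0:ℝ) 1, Summable (fun i : ℕ => π i * t ^ i) := by
    intro t ht
    refine hS.of_nonneg_of_le (fun i => mul_nonneg (hπ i) (pow_nonneg ht.1 i)) (fun i => ?_)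
    calc π i * t ^ i ≤ π i * 1 :=
          mul_le_mul_of_nonneg_left (pow_le_one₀ ht.1 ht.2) (hπ i)
      _ = π i := mul_one _
  refine ⟨convex_Icc 0 1, fun x hx y hy a b ha hb hab => ?_⟩
  have hm : a • x + b • y ∈ Set.Icc (0:ℝ) 1 := (convex_Icc (0:ℝ) 1) hx hy ha hb hab
  simp only [smul_eq_mul] at *
  rw [hf _ hm, hf _ hx, hf _ hy]
  calc (∑' i : ℕ, π i * (a * x + b * y) ^ i)
      ≤ ∑' i : ℕ, (a * (π i * x ^ i) + b * (π i * y ^ i)) := by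
        refine Summable.tsum_le_tsum (fun i => ?_) (Sx _ hm)
          (((Sx x hx).mul_left a).add ((Sx y hy).mul_left b))
        have h := (convexOn_pow i).2 (Set.mem_Ici.2 hx.1) (Set.mem_Ici.2 hy.1) ha hb hab
        simp only [smul_eq_mul] at h
        have := mul_le_mul_of_nonneg_left h (hπ i)
        nlinarith [this]
    _ = a * (∑' i : ℕ, π i * x ^ i) + b * (∑' i : ℕ, π i * y ^ i) := by
        rw [Summable.tsum_add ((Sx x hx).mul_left a) ((Sx y hy).mul_left b),
          tsum_mul_left, tsum_mul_left]

/-- With g(α,s) = (1/(1-α))·f(f⁻¹(1-α) - (1-s)f'(f⁻¹(1-α))/f'(1)) and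
ĝ(α,s) = ∂_s g(α,s)/∂_s g(α,1), one has ∂_s g(α,1) = f'(f⁻¹(1-α))²/((1-α)f'(1)),
∂_s ĝ(α,1) = f''(f⁻¹(1-α))/f'(1), and in particular ∂_s ĝ(α_c,1) = 1 where α_c is
the smallest positive solution of f''(f⁻¹(1-α))/f'(1) = 1. -/
theorem stmt11 (π : ℕ → ℝ) (hπ : ∀ i, 0 ≤ π i) (hπ1 : HasSum π 1)
    (hmom2 : Summable (fun i : ℕ => (i : ℝ) ^ 2 * π i)) (h0 : π 0 < 1)
    (f finv : ℝ → ℝ) (g gh : ℝ → ℝ → ℝ) (αc : ℝ)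
    (hf : ∀ s ∈ Set.Icc (0 : ℝ) 1, f s = ∑' i : ℕ, π i * s ^ i)
    (hreg : ContDiff ℝ 2 f)
    (hmono : StrictMonoOn f (Set.Icc (0 : ℝ) 1))
    (hinv : ∀ y ∈ Set.Icc (f 0) 1, finv y ∈ Set.Icc (0 : ℝ) 1 ∧ f (finv y) = y)
    (hαc : 0 < αc ∧ αc < 1 - f 0)
    (hsuper : deriv f 1 < iteratedDeriv 2 f 1)
    (hg : ∀ α : ℝ, ∀ s : ℝ,
      g α s = (1 / (1 - α)) *
        f (finv (1 - α) - (1 - s) * deriv f (finv (1 - α)) / deriv f 1))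
    (hgh : ∀ α : ℝ, ∀ s : ℝ, gh α s = deriv (g α) s / deriv (g α) 1)
    (hαcroot : iteratedDeriv 2 f (finv (1 - αc)) / deriv f 1 = 1)
    (hαcmin : ∀ α : ℝ, 0 < α → iteratedDeriv 2 f (finv (1 - α)) / deriv f 1 = 1 → αc ≤ α) :
    (∀ α ∈ Set.Icc (0 : ℝ) αc,
      deriv (g α) 1 = (deriv f (finv (1 - α))) ^ 2 / ((1 - α) * deriv f 1)) ∧
    (∀ α ∈ Set.Icc (0 : ℝ) αc,
      deriv (gh α) 1 = iteratedDeriv 2 f (finv (1 - α)) / deriv f 1) ∧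
    deriv (gh αc) 1 = 1 := by
  have hfd : Differentiable ℝ f := hreg.differentiable (by norm_num)
  have hfd2 : Differentiable ℝ (deriv f) := by
    have h2 : ContDiff ℝ (1 + 1) f := by rw [one_add_one_eq_two]; exact hreg
    exact ((contDiff_succ_iff_deriv.mp h2).2.2).differentiable one_ne_zero
  have hf1 : f 1 = 1 := by
    rw [hf 1 (by norm_num)]; simpa using hπ1.tsum_eq
  have hf0 : f 0 = π 0 := by
    rw [hf 0 (by norm_num)]
    rw [tsum_eq_single 0 (fun i hi => by simp [zero_pow hi])]
    simp
  have hf0nn : 0 ≤ f 0 := hf0 ▸ hπ 0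
  have hconv : ConvexOn ℝ (Set.Icc (0:ℝ) 1) f := conv_f π hπ hπ1.summable f hf
  have hd : 0 < deriv f 1 := by
    have hs := hconv.slope_le_deriv ⟨le_rfl, zero_le_one⟩ ⟨zero_le_one, le_rfl⟩
      zero_lt_one (hfd 1)
    rw [slope_def_field] at hs
    have h01 : (0:ℝ) < (f 1 - f 0) / (1 - 0) := by
      rw [hf1, hf0]; norm_num; linarith
    linarith
  have hαc1 : αc < 1 := by linarith [hαc.2]
  have i2 : iteratedDeriv 2 f = deriv (deriv f) := by
    rw [show (2:ℕ) = 1 + 1 from rfl, iteratedDeriv_succ, iteratedDeriv_one]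
  -- main per-α facts
  have key : ∀ α ∈ Set.Icc (0:ℝ) αc,
      deriv (g α) 1 = (deriv f (finv (1 - α))) ^ 2 / ((1 - α) * deriv f 1) ∧
      deriv (gh α) 1 = iteratedDeriv 2 f (finv (1 - α)) / deriv f 1 := by
    intro α hα
    obtain ⟨hα0, hααc⟩ := hα
    have hα1 : α < 1 := lt_of_le_of_lt hααc hαc1
    set a := finv (1 - α) with ha_def
    obtain ⟨haI, hfa⟩ := hinv (1 - α) ⟨by linarith [hαc.2], by linarith⟩
    have hfa_gt : f 0 < f a := by rw [hfa]; linarith [hαc.2]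
    have hapos : 0 < a := lt_of_le_of_ne haI.1 (fun h => by rw [← h] at hfa_gt; exact lt_irrefl _ hfa_gt)
    have hb : 0 < deriv f a := by
      have hs := hconv.slope_le_deriv ⟨le_rfl, zero_le_one⟩ haI hapos (hfd a)
      rw [slope_def_field] at hs
      have : 0 < (f a - f 0) / (a - 0) := div_pos (by linarith) (by linarith)
      linarith
    set b := deriv f a with hb_def
    set d := deriv f 1 with hd_def
    have h1α : (1:ℝ) - α ≠ 0 := by intro h; linarith [h]
    have hgfun : g α = fun s => (1 / (1 - α)) * f (a - (1 - s) * b / d) := funext (hg α)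
    have hdg : ∀ s : ℝ, deriv (g α) s = (1 / (1 - α)) * (b / d) * deriv f (a - (1 - s) * b / d) := by
      intro s; rw [hgfun]; exact deriv_aff f hfd _ a b d s
    have hK : deriv (g α) 1 = b ^ 2 / ((1 - α) * d) := by
      rw [hdg 1]
      norm_num
      have hd' := hd.ne'
      have hb' := hb.ne'
      field_simp
      ring
    refine ⟨hK, ?_⟩
    have hghfun : gh α = fun s => deriv (g α) s / deriv (g α) 1 := funext (hgh α)
    have hdgfun : deriv (g α) = fun s => (1 / (1 - α) * (b / d)) * deriv f (a - (1 - s) * b / d) := by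
      funext s; rw [hdg s]
    rw [hghfun, deriv_div_const, hK, hdgfun, deriv_aff (deriv f) hfd2 _ a b d 1]
    norm_num
    rw [i2]
    have hd' := hd.ne'
    have hb' := hb.ne'
    field_simp
  refine ⟨fun α hα => (key α hα).1, fun α hα => (key α hα).2, ?_⟩
  rw [(key αc ⟨hαc.1.le, le_rfl⟩).2, hαcroot]
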